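/- For the curvature tensor R(x, y)z = ∇ₓ∇_y z - ∇_y∇ₓ z - ∇_{[x,y]} z of the 3-dimensional example, with R(x,y,z,w) = g(R(x,y)z, w), the components satisfy R(e₁,e₂,e₂,e₁) = 1, R(e₁,e₃,e₃,e₁) = 1 and R(e₂,e₃,e₃,e₂) = -1. -/

import Mathlib

noncomputable section

/-- The underlying 3-dimensional real vector space. -/
abbrev V3 := Fin 3 → ℝ

/-- The basis `(e₁, e₂, e₃)` (standard basis of `ℝ³`). -/
def e3 (i : Fin 3) : V3 := Pi.single i 1

/-- The Lie bracket: the bilinear extension of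
`[e₃, e₁] = e₂`, `[e₃, e₂] = -e₁`, `[e₁, e₂] = 0`. -/
def br3 (x y : V3) : V3 :=
  ![x 1 * y 2 - x 2 * y 1, x 2 * y 0 - x 0 * y 2, 0]

/-- The B-metric `g`: `g(e₁,e₁) = 1`, `g(e₂,e₂) = -1`, `g(e₃,e₃) = 1`,
`g(eᵢ,eⱼ) = 0` for `i ≠ j`. -/
def gM3 (x y : V3) : ℝ := x 0 * y 0 - x 1 * y 1 + x 2 * y 2

/-- The structure endomorphism `φ`: `φe₁ = e₂`, `φe₂ = -e₁`, `φe₃ = 0`. -/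
def phi3 (x : V3) : V3 := ![-(x 1), x 0, 0]

/-- The Reeb vector field `ξ = e₃`. -/
def xi3 : V3 := e3 2

/-- The contact form `η`: `η(e₁) = η(e₂) = 0`, `η(e₃) = 1`. -/
def eta3 (x : V3) : ℝ := x 2

/-- The Koszul formula for the Levi-Civita connection of a left-invariant metric. -/
def Koszul3 (nabla : V3 → V3 → V3) : Prop :=
  ∀ x y z : V3,
    2 * gM3 (nabla x y) z = gM3 (br3 x y) z - gM3 (br3 y z) x + gM3 (br3 z x) y

/-- The curvature tensor `R(x,y)z = ∇ₓ∇_y z - ∇_y ∇ₓ z - ∇_{[x,y]} z`. -/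
def R3 (nabla : V3 → V3 → V3) (x y z : V3) : V3 :=
  nabla x (nabla y z) - nabla y (nabla x z) - nabla (br3 x y) z

/-- The Ricci tensor `ρ(y,z)`: the trace of the map `x ↦ R(x,y)z`,
computed in the standard basis. -/
def ric3 (nabla : V3 → V3 → V3) (y z : V3) : ℝ :=
  ∑ i : Fin 3, R3 nabla (e3 i) y z i

lemma nabla_eq (nabla : V3 → V3 → V3) (hK : Koszul3 nabla) (x y : V3) :
    nabla x y = ![x 1 * y 2, -(x 0 * y 2), -(x 0 * y 1 + x 1 * y 0)] := by
  have h0 := hK x y (e3 0)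
  have h1 := hK x y (e3 1)
  have h2 := hK x y (e3 2)
  simp only [gM3, br3, e3] at h0 h1 h2
  norm_num [Pi.single_apply, Fin.ext_iff, Matrix.cons_val_two, Matrix.tail_cons, Matrix.head_cons] at h0 h1 h2
  funext i
  fin_cases i <;> simp <;> linarith

/-- The curvature components of the 3-dimensional example:
`R(e₁,e₂,e₂,e₁) = 1`, `R(e₁,e₃,e₃,e₁) = 1`, `R(e₂,e₃,e₃,e₂) = -1`,
where `R(x,y,z,w) = g(R(x,y)z, w)`. -/
theorem curvature_components_3dim (nabla : V3 → V3 → V3) (hK : Koszul3 nabla) :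
    gM3 (R3 nabla (e3 0) (e3 1) (e3 1)) (e3 0) = 1 ∧
    gM3 (R3 nabla (e3 0) (e3 2) (e3 2)) (e3 0) = 1 ∧
    gM3 (R3 nabla (e3 1) (e3 2) (e3 2)) (e3 1) = -1 := by
  simp only [R3, nabla_eq nabla hK, gM3, br3, e3]
  norm_num [Pi.single_apply, Fin.ext_iff, Matrix.cons_val_zero, Matrix.cons_val_one, Matrix.cons_val_two, Matrix.tail_cons, Matrix.head_cons]
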